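/- arXiv:2302.12040 — 3 statements merged into one kernel-verified Lean document; each statement's English description precedes it below -/
import Mathlib

section
/- If K ≤ Perm(Y) is semiregular and H ≤ Perm(X) is transitive, then the partition 𝒫 = {X_y : y ∈ Y} of Z = X × Y is stable under the normalizer N of W = H ≀ K in Perm(Z): for every α ∈ N and every y ∈ Y there exists y' ∈ Y with α(X_y) = X_{y'}. Consequently, the induced map Ω : N → Perm(𝒫), sending α to the permutation of blocks X_y ↦ α(X_y), is a group homomorphism whose kernel is N ∩ S_Y(Z). -/
open Equiv

/-- The block `X_y = X × {y}` inside `Z = X × Y`. -/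
def block (X Y : Type*) (y : Y) : Set (X × Y) := {p | p.2 = y}

/-- The subgroup `S_Y(Z)` of all permutations of `Z = X × Y` stabilizing every block `X_y`. -/
def blockStab (X Y : Type*) : Subgroup (Perm (X × Y)) where
  carrier := {f | ∀ y : Y, f '' block X Y y = block X Y y}
  one_mem' := by intro y; simp
  mul_mem' := by
    intro f g hf hg y
    have hfg : ⇑(f * g) = ⇑f ∘ ⇑g := rfl
    rw [hfg, Set.image_comp, hg y, hf y]
  inv_mem' := by
    intro f hf y
    have h1 : ⇑f '' block X Y y = block X Y y := hf y
    calc ⇑f⁻¹ '' block X Y y = ⇑f⁻¹ '' (⇑f '' block X Y y) := by rw [h1]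
      _ = block X Y y := by
          rw [← Set.image_comp]
          have h2 : ⇑f⁻¹ ∘ ⇑f = id := by funext p; simp
          rw [h2, Set.image_id]

/-- For `h` a permutation of `X` and `y ∈ Y`, the permutation `h_y` of `Z = X × Y`
acting as `h` on the block `X_y` and fixing everything else. -/
noncomputable def fiberPerm (X Y : Type*) (h : Perm X) (y : Y) : Perm (X × Y) :=
  letI := Classical.decEq Y
  { toFun := fun p => if p.2 = y then (h p.1, p.2) else p
    invFun := fun p => if p.2 = y then (h.symm p.1, p.2) else p
    left_inv := fun p => by
      obtain ⟨x, y'⟩ := p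
      by_cases hp : y' = y <;> simp [hp]
    right_inv := fun p => by
      obtain ⟨x, y'⟩ := p
      by_cases hp : y' = y <;> simp [hp] }

lemma fiberPerm_apply_eq (X Y : Type*) (h : Perm X) (y : Y) (x : X) :
    fiberPerm X Y h y (x, y) = (h x, y) := by
  simp [fiberPerm]

lemma fiberPerm_apply_ne (X Y : Type*) (h : Perm X) (y : Y) (p : X × Y) (hp : p.2 ≠ y) :
    fiberPerm X Y h y p = p := by
  simp [fiberPerm, hp]

/-- The homomorphism `h ↦ h_y`. -/
noncomputable def fiberHom (X Y : Type*) (y : Y) : Perm X →* Perm (X × Y) where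
  toFun h := fiberPerm X Y h y
  map_one' := by
    refine Equiv.ext fun p => ?_
    by_cases hp : p.2 = y
    · obtain ⟨x, y'⟩ := p; subst hp; simp [fiberPerm_apply_eq]
    · simp [fiberPerm_apply_ne _ _ _ _ _ hp]
  map_mul' := by
    intro h1 h2
    refine Equiv.ext fun p => ?_
    by_cases hp : p.2 = y
    · obtain ⟨x, y'⟩ := p
      subst hp
      simp [Perm.mul_apply, fiberPerm_apply_eq]
    · simp [Perm.mul_apply, fiberPerm_apply_ne _ _ _ _ _ hp]

/-- The embedding `Λ` of permutations of `Y` into permutations of `Z = X × Y`,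
`Λ(k)(x,y) = (x, k(y))`. -/
def lamHom (X Y : Type*) : Perm Y →* Perm (X × Y) where
  toFun k := (Equiv.refl X).prodCongr k
  map_one' := Equiv.ext fun p => rfl
  map_mul' := fun k1 k2 => Equiv.ext fun p => rfl

lemma lamHom_apply (X Y : Type*) (k : Perm Y) (x : X) (y : Y) :
    lamHom X Y k (x, y) = (x, k y) := rfl

/-- The base group `B` of the wreath product: all permutations of `Z = X × Y`
stabilizing each block `X_y` and restricting to an element of `H_y` on it. -/
def baseGroup (X Y : Type*) (H : Subgroup (Perm X)) : Subgroup (Perm (X × Y)) where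
  carrier := {f | ∀ y : Y, ∃ h ∈ H, ∀ x : X, f (x, y) = (h x, y)}
  one_mem' := fun y => ⟨1, H.one_mem, fun x => rfl⟩
  mul_mem' := by
    rintro f g hf hg y
    obtain ⟨hg', hgH, hgeq⟩ := hg y
    obtain ⟨hf', hfH, hfeq⟩ := hf y
    refine ⟨hf' * hg', H.mul_mem hfH hgH, fun x => ?_⟩
    have : (f * g) (x, y) = f (g (x, y)) := rfl
    rw [this, hgeq x, hfeq (hg' x)]
    rfl
  inv_mem' := by
    rintro f hf y
    obtain ⟨h, hH, heq⟩ := hf y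
    refine ⟨h⁻¹, H.inv_mem hH, fun x => ?_⟩
    have h1 : f ((h⁻¹ : Perm X) x, y) = (x, y) := by
      rw [heq]
      simp
    calc f⁻¹ (x, y) = f⁻¹ (f ((h⁻¹ : Perm X) x, y)) := by rw [h1]
      _ = ((h⁻¹ : Perm X) x, y) := by simp

lemma mem_baseGroup_iff (X Y : Type*) (H : Subgroup (Perm X)) (f : Perm (X × Y)) :
    f ∈ baseGroup X Y H ↔ ∀ y : Y, ∃ h ∈ H, ∀ x : X, f (x, y) = (h x, y) := Iff.rfl

lemma lam_conj_base (X Y : Type*) {H : Subgroup (Perm X)} (k : Perm Y) {b : Perm (X × Y)}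
    (hb : b ∈ baseGroup X Y H) : (lamHom X Y k)⁻¹ * b * lamHom X Y k ∈ baseGroup X Y H := by
  intro y
  obtain ⟨h, hH, heq⟩ := hb (k y)
  refine ⟨h, hH, fun x => ?_⟩
  have h2 : ((lamHom X Y k)⁻¹ : Perm (X × Y)) (h x, k y) = (h x, y) := by
    have h3 : (lamHom X Y k) (h x, y) = (h x, k y) := rfl
    rw [← h3]
    simp
  calc ((lamHom X Y k)⁻¹ * b * lamHom X Y k) (x, y)
      = (lamHom X Y k)⁻¹ (b ((lamHom X Y k) (x, y))) := rfl
    _ = (lamHom X Y k)⁻¹ (b (x, k y)) := rfl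
    _ = (lamHom X Y k)⁻¹ (h x, k y) := by rw [heq x]
    _ = (h x, y) := h2

/-- The unrestricted wreath product `W = H ≀ K ≤ Perm(X × Y)`, namely the
internal product `Λ(K)·B`. -/
def wreath (X Y : Type*) (H : Subgroup (Perm X)) (K : Subgroup (Perm Y)) :
    Subgroup (Perm (X × Y)) where
  carrier := {w | ∃ k ∈ K, ∃ b ∈ baseGroup X Y H, w = lamHom X Y k * b}
  one_mem' := ⟨1, K.one_mem, 1, (baseGroup X Y H).one_mem, by simp⟩
  mul_mem' := by
    rintro w1 w2 ⟨k1, hk1, b1, hb1, rfl⟩ ⟨k2, hk2, b2, hb2, rfl⟩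
    refine ⟨k1 * k2, K.mul_mem hk1 hk2, ((lamHom X Y k2)⁻¹ * b1 * lamHom X Y k2) * b2,
      (baseGroup X Y H).mul_mem (lam_conj_base X Y k2 hb1) hb2, ?_⟩
    rw [map_mul]
    group
  inv_mem' := by
    rintro w ⟨k, hk, b, hb, rfl⟩
    refine ⟨k⁻¹, K.inv_mem hk, (lamHom X Y k⁻¹)⁻¹ * b⁻¹ * lamHom X Y k⁻¹,
      lam_conj_base X Y k⁻¹ ((baseGroup X Y H).inv_mem hb), ?_⟩
    rw [map_inv]
    group

lemma mem_wreath_iff (X Y : Type*) (H : Subgroup (Perm X)) (K : Subgroup (Perm Y))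
    (w : Perm (X × Y)) :
    w ∈ wreath X Y H K ↔ ∃ k ∈ K, ∃ b ∈ baseGroup X Y H, w = lamHom X Y k * b := Iff.rfl

/-- The image of the (right) regular representation of a group `K` in `Perm K`. -/
def rightRegular (K : Type*) [Group K] : Subgroup (Perm K) where
  carrier := Set.range (fun k : K => Equiv.mulRight k)
  one_mem' := ⟨1, by ext x; simp⟩
  mul_mem' := by
    rintro _ _ ⟨a, rfl⟩ ⟨b, rfl⟩
    exact ⟨b * a, by ext x; simp [mul_assoc]⟩
  inv_mem' := by
    rintro _ ⟨a, rfl⟩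
    exact ⟨a⁻¹, by ext x; simp⟩

/-- The homomorphism `Γ : Aut(K) → Perm(X × K)`, `Γ(γ)(x,k) = (x, γ(k))`. -/
def gammaHom (X K : Type*) [Group K] : MulAut K →* Perm (X × K) where
  toFun γ := (Equiv.refl X).prodCongr γ.toEquiv
  map_one' := Equiv.ext fun p => rfl
  map_mul' := fun γ1 γ2 => Equiv.ext fun p => rfl

lemma gammaHom_apply (X K : Type*) [Group K] (γ : MulAut K) (x : X) (k : K) :
    gammaHom X K γ (x, k) = (x, γ k) := rfl

/-- The homomorphism `m ↦ m*` from `Perm X` to `Perm (X × K)`, `m*(x,k) = (m(x), k)`. -/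
def mstarHom (X K : Type*) : Perm X →* Perm (X × K) where
  toFun m := m.prodCongr (Equiv.refl K)
  map_one' := Equiv.ext fun p => rfl
  map_mul' := fun m1 m2 => Equiv.ext fun p => rfl

lemma mstarHom_apply (X K : Type*) (m : Perm X) (x : X) (k : K) :
    mstarHom X K m (x, k) = (m x, k) := rfl

lemma baseGroup_snd {X Y : Type*} {H : Subgroup (Perm X)} {b : Perm (X × Y)}
    (hb : b ∈ baseGroup X Y H) (p : X × Y) : (b p).2 = p.2 := by
  obtain ⟨h, _, heq⟩ := hb p.2
  have h1 : b (p.1, p.2) = (h p.1, p.2) := heq p.1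
  rw [show (p.1, p.2) = p from rfl] at h1
  rw [h1]

lemma wreath_snd {X Y : Type*} {H : Subgroup (Perm X)} {k : Perm Y} {b : Perm (X × Y)}
    (hb : b ∈ baseGroup X Y H) (p : X × Y) :
    ((lamHom X Y k * b) p).2 = k p.2 := by
  have h1 : (lamHom X Y k * b) p = lamHom X Y k (b p) := rfl
  have h2 : lamHom X Y k (b p) = ((b p).1, k (b p).2) := rfl
  rw [h1, h2, baseGroup_snd hb]

/-- An element of the wreath product with a fixed point preserves every block. -/
lemma wreath_fix_snd {X Y : Type*} {H : Subgroup (Perm X)} {K : Subgroup (Perm Y)}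
    (hsemi : ∀ k ∈ K, (∃ y : Y, k y = y) → k = 1)
    {w : Perm (X × Y)} (hw : w ∈ wreath X Y H K) {z : X × Y} (hz : w z = z)
    (p : X × Y) : (w p).2 = p.2 := by
  obtain ⟨k, hk, b, hb, rfl⟩ := hw
  have hfix : k z.2 = z.2 := by
    have := wreath_snd (k := k) hb z
    rw [hz] at this
    exact this.symm
  have hk1 : k = 1 := hsemi k hk ⟨z.2, hfix⟩
  rw [wreath_snd hb, hk1, Perm.one_apply]

lemma fiberPerm_mem_wreath {X Y : Type*} {H : Subgroup (Perm X)} {K : Subgroup (Perm Y)}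
    {h : Perm X} (hh : h ∈ H) (y : Y) : fiberPerm X Y h y ∈ wreath X Y H K := by
  refine ⟨1, K.one_mem, fiberPerm X Y h y, ?_, by rw [map_one, one_mul]⟩
  intro y'
  by_cases hy : y' = y
  · subst hy
    exact ⟨h, hh, fun x => fiberPerm_apply_eq X Y h y' x⟩
  · exact ⟨1, H.one_mem, fun x => by
      rw [fiberPerm_apply_ne X Y h y (x, y') hy, Perm.one_apply]⟩

/-- In the nontrivial case, "same block" is characterized intrinsically in terms of `W`. -/
lemma same_block_iff {X Y : Type*} {H : Subgroup (Perm X)} {K : Subgroup (Perm Y)}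
    (hsemi : ∀ k ∈ K, (∃ y : Y, k y = y) → k = 1)
    (hH : ∀ x x' : X, ∃ h ∈ H, h x = x') (x₀ : X) [Nontrivial Y] (p q : X × Y) :
    p.2 = q.2 ↔ ∃ w ∈ wreath X Y H K, w p = q ∧ ∃ z, w z = z := by
  constructor
  · intro hpq
    obtain ⟨h, hh, hx⟩ := hH p.1 q.1
    obtain ⟨y₁, hy₁⟩ := exists_ne p.2
    refine ⟨fiberPerm X Y h p.2, fiberPerm_mem_wreath hh p.2, ?_, (x₀, y₁), ?_⟩
    · have := fiberPerm_apply_eq X Y h p.2 p.1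
      rw [show (p.1, p.2) = p from rfl] at this
      rw [this, hx, hpq]
    · exact fiberPerm_apply_ne X Y h p.2 (x₀, y₁) hy₁
  · rintro ⟨w, hw, hwp, z, hz⟩
    have := wreath_fix_snd hsemi hw hz p
    rw [hwp] at this
    exact this.symm

/-- Conjugation invariance: the normalizer preserves the "same block" relation. -/
lemma normalizer_same_block {X Y : Type*} {H : Subgroup (Perm X)} {K : Subgroup (Perm Y)}
    (hsemi : ∀ k ∈ K, (∃ y : Y, k y = y) → k = 1)
    (hH : ∀ x x' : X, ∃ h ∈ H, h x = x') (x₀ : X) [Nontrivial Y]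
    {α : Perm (X × Y)} (hα : α ∈ (Subgroup.normalizer (wreath X Y H K : Set (Perm (X × Y))))) (p q : X × Y)
    (hpq : p.2 = q.2) : (α p).2 = (α q).2 := by
  rw [same_block_iff hsemi hH x₀] at hpq ⊢
  obtain ⟨w, hw, hwp, z, hz⟩ := hpq
  refine ⟨α * w * α⁻¹, (Subgroup.mem_normalizer_iff.mp hα w).mp hw, ?_, α z, ?_⟩
  · have : (α * w * α⁻¹) (α p) = α (w (α⁻¹ (α p))) := rfl
    rw [this, Perm.inv_def, Equiv.symm_apply_apply, hwp]
  · have : (α * w * α⁻¹) (α z) = α (w (α⁻¹ (α z))) := rfl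
    rw [this, Perm.inv_def, Equiv.symm_apply_apply, hz]

/-- **Lemma C.** If `K ≤ Perm Y` is semiregular and `H ≤ Perm X` is transitive, then the
partition `𝒫 = {X_y : y ∈ Y}` of `Z = X × Y` is stable under the normalizer `N` of
`W = H ≀ K` in `Perm Z`; consequently there is a group homomorphism `Ω : N → Perm 𝒫`,
`α ↦ (X_y ↦ α(X_y))`, whose kernel is `N ∩ S_Y(Z)`. -/
theorem normalizer_stabilizes_partition {X Y : Type*} (H : Subgroup (Perm X))
    (K : Subgroup (Perm Y))
    (hsemi : ∀ k ∈ K, (∃ y : Y, k y = y) → k = 1)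
    (hH : ∀ x x' : X, ∃ h ∈ H, h x = x') :
    (∀ α ∈ (Subgroup.normalizer (wreath X Y H K : Set (Perm (X × Y)))), ∀ y : Y,
        ∃ y' : Y, α '' block X Y y = block X Y y') ∧
    ∃ Ω : (Subgroup.normalizer (wreath X Y H K : Set (Perm (X × Y)))) →* Perm {S : Set (X × Y) // ∃ y : Y, S = block X Y y},
      (∀ (α : (Subgroup.normalizer (wreath X Y H K : Set (Perm (X × Y)))))
          (S : {S : Set (X × Y) // ∃ y : Y, S = block X Y y}),
        (Ω α S : Set (X × Y)) = (α : Perm (X × Y)) '' (S : Set (X × Y))) ∧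
      (∀ α : (Subgroup.normalizer (wreath X Y H K : Set (Perm (X × Y)))),
        α ∈ Ω.ker ↔ (α : Perm (X × Y)) ∈ blockStab X Y) := by
  have hstab : ∀ α ∈ (Subgroup.normalizer (wreath X Y H K : Set (Perm (X × Y)))), ∀ y : Y,
      ∃ y' : Y, α '' block X Y y = block X Y y' := by
    by_cases hX : Nonempty X
    · obtain ⟨x₀⟩ := hX
      by_cases hYt : Nontrivial Y
      · intro α hα y
        refine ⟨(α (x₀, y)).2, ?_⟩
        ext q
        constructor
        · rintro ⟨p, hp, rfl⟩
          exact normalizer_same_block hsemi hH x₀ hα p (x₀, y) hp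
        · intro hq
          refine ⟨α⁻¹ q, ?_, by simp⟩
          have h1 : (α⁻¹ q).2 = (α⁻¹ (α (x₀, y))).2 :=
            normalizer_same_block hsemi hH x₀
              ((Subgroup.normalizer (wreath X Y H K : Set (Perm (X × Y)))).inv_mem hα) q (α (x₀, y)) hq
          rw [Perm.inv_def, Equiv.symm_apply_apply] at h1
          exact h1
      · have hYs : Subsingleton Y := not_nontrivial_iff_subsingleton.mp hYt
        intro α hα y
        refine ⟨y, ?_⟩
        have hb : block X Y y = Set.univ := by
          ext p
          simp [block, Subsingleton.elim p.2 y]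
        rw [hb, Set.image_univ, Equiv.range_eq_univ]
    · intro α hα y
      refine ⟨y, ?_⟩
      have hb : block X Y y = ∅ := by
        ext p
        exact absurd ⟨p.1⟩ hX
      rw [hb]
      simp
  refine ⟨hstab, ?_⟩
  have hmem : ∀ (α : (Subgroup.normalizer (wreath X Y H K : Set (Perm (X × Y)))))
      (S : {S : Set (X × Y) // ∃ y : Y, S = block X Y y}),
      ∃ y' : Y, (α : Perm (X × Y)) '' S.1 = block X Y y' := by
    intro α S
    obtain ⟨y, hy⟩ := S.2
    rw [hy]
    exact hstab α α.2 y
  have hinvco : ∀ α : (Subgroup.normalizer (wreath X Y H K : Set (Perm (X × Y)))),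
      ((α⁻¹ : (Subgroup.normalizer (wreath X Y H K : Set (Perm (X × Y))))) : Perm (X × Y)) = (α : Perm (X × Y))⁻¹ :=
    fun α => rfl
  let F : (Subgroup.normalizer (wreath X Y H K : Set (Perm (X × Y)))) →
      Perm {S : Set (X × Y) // ∃ y : Y, S = block X Y y} := fun α =>
    { toFun := fun S => ⟨(α : Perm (X × Y)) '' S.1, hmem α S⟩
      invFun := fun S => ⟨((α⁻¹ : (Subgroup.normalizer (wreath X Y H K : Set (Perm (X × Y))))) : Perm (X × Y)) '' S.1,
        hmem α⁻¹ S⟩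
      left_inv := fun S => by
        refine Subtype.ext ?_
        show ((α⁻¹ : (Subgroup.normalizer (wreath X Y H K : Set (Perm (X × Y))))) : Perm (X × Y)) ''
          ((α : Perm (X × Y)) '' S.1) = S.1
        rw [hinvco, ← Set.image_comp]
        have h2 : ⇑((α : Perm (X × Y))⁻¹) ∘ ⇑(α : Perm (X × Y)) = id := by
          funext p; simp
        rw [h2, Set.image_id]
      right_inv := fun S => by
        refine Subtype.ext ?_
        show (α : Perm (X × Y)) ''
          (((α⁻¹ : (Subgroup.normalizer (wreath X Y H K : Set (Perm (X × Y))))) : Perm (X × Y)) '' S.1) = S.1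
        rw [hinvco, ← Set.image_comp]
        have h2 : ⇑(α : Perm (X × Y)) ∘ ⇑((α : Perm (X × Y))⁻¹) = id := by
          funext p; simp
        rw [h2, Set.image_id] }
  have hF : ∀ (α : (Subgroup.normalizer (wreath X Y H K : Set (Perm (X × Y))))) S,
      ((F α S : Set (X × Y))) = (α : Perm (X × Y)) '' (S : Set (X × Y)) := fun α S => rfl
  refine ⟨{ toFun := F, map_one' := ?_, map_mul' := ?_ }, fun α S => rfl, ?_⟩
  · refine Equiv.ext fun S => Subtype.ext ?_
    show ((1 : (Subgroup.normalizer (wreath X Y H K : Set (Perm (X × Y))))) : Perm (X × Y)) '' S.1 = S.1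
    simp
  · intro α β
    refine Equiv.ext fun S => Subtype.ext ?_
    show ((α * β : (Subgroup.normalizer (wreath X Y H K : Set (Perm (X × Y))))) : Perm (X × Y)) '' S.1
      = (α : Perm (X × Y)) '' ((β : Perm (X × Y)) '' S.1)
    rw [← Set.image_comp]
    rfl
  · intro α
    constructor
    · intro hker y
      have h1 : F α ⟨block X Y y, ⟨y, rfl⟩⟩ = ⟨block X Y y, ⟨y, rfl⟩⟩ := by
        have := Equiv.ext_iff.mp hker ⟨block X Y y, ⟨y, rfl⟩⟩
        simpa using this
      exact congrArg Subtype.val h1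
    · intro hbs
      refine Equiv.ext fun S => Subtype.ext ?_
      obtain ⟨y, hy⟩ := S.2
      show (α : Perm (X × Y)) '' S.1 = S.1
      rw [hy]
      exact hbs y
end

section
/- Assume Y = K acts on itself by the regular representation and H ≤ Perm(X) is transitive. Then the image of the block homomorphism Ω : N → Perm(𝒫) is the internal semidirect product of Ω(Γ(Aut(K))) and Ω(Λ(K)): that is, Ω(N) = Ω(Γ(Aut(K))) · Ω(Λ(K)), the subgroup Ω(Λ(K)) is normal in Ω(N), and Ω(Γ(Aut(K))) ∩ Ω(Λ(K)) = 1. -/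
open Equiv

section Aux

variable {X K : Type*} [Group K]

lemma prodCongr_image_block (e : Perm K) (k : K) :
    ⇑(Equiv.prodCongr (Equiv.refl X) e) '' block X K k = block X K (e k) := by
  ext p
  constructor
  · rintro ⟨⟨x0, k0⟩, hk0, rfl⟩
    have : k0 = k := hk0
    simp [block, Equiv.prodCongr, this]
  · intro hk'
    obtain ⟨x, k'⟩ := p
    have hk'' : k' = e k := hk'
    exact ⟨(x, k), rfl, by simp [Equiv.prodCongr, hk'']⟩

lemma lam_image_block (c k : K) :
    ⇑(lamHom X K (Equiv.mulRight c)) '' block X K k = block X K (k * c) :=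
  prodCongr_image_block (Equiv.mulRight c) k

lemma gamma_image_block (γ : MulAut K) (k : K) :
    ⇑(gammaHom X K γ) '' block X K k = block X K (γ k) :=
  prodCongr_image_block γ.toEquiv k

lemma lam_mem_wreath (H : Subgroup (Perm X)) (c : K) :
    lamHom X K (Equiv.mulRight c) ∈ wreath X K H (rightRegular K) :=
  ⟨Equiv.mulRight c, ⟨c, rfl⟩, 1, (baseGroup X K H).one_mem, (mul_one _).symm⟩

lemma wreathElt_image_block {H : Subgroup (Perm X)} {w : Perm (X × K)}
    (hw : w ∈ wreath X K H (rightRegular K)) :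
    ∃ c : K, ∀ k : K, ⇑w '' block X K k = block X K (k * c) := by
  obtain ⟨kp, ⟨c, rfl⟩, b, hb, rfl⟩ := hw
  refine ⟨c, fun k => ?_⟩
  obtain ⟨h, hH, heq⟩ := hb k
  ext p
  constructor
  · rintro ⟨⟨x0, k0⟩, hk0, rfl⟩
    have hk0' : k0 = k := hk0
    show ((lamHom X K (Equiv.mulRight c) * b) (x0, k0)).2 = k * c
    rw [hk0', Perm.mul_apply, heq, lamHom_apply]
    rfl
  · intro hk'
    obtain ⟨x, k'⟩ := p
    have hk'' : k' = k * c := hk'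
    refine ⟨((h⁻¹ : Perm X) x, k), rfl, ?_⟩
    show (lamHom X K (Equiv.mulRight c) * b) ((h⁻¹ : Perm X) x, k) = (x, k')
    rw [Perm.mul_apply, heq, lamHom_apply]
    simp [hk'']

lemma gamma_conj_wreath (H : Subgroup (Perm X)) (γ : MulAut K) {w : Perm (X × K)}
    (hw : w ∈ wreath X K H (rightRegular K)) :
    gammaHom X K γ * w * (gammaHom X K γ)⁻¹ ∈ wreath X K H (rightRegular K) := by
  obtain ⟨kp, ⟨c, rfl⟩, b, hb, rfl⟩ := hw
  have hginv : ∀ p : X × K, (gammaHom X K γ)⁻¹ p = (p.1, γ⁻¹ p.2) := by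
    intro p
    rw [← map_inv]
    rfl
  refine ⟨Equiv.mulRight (γ c), ⟨γ c, rfl⟩,
    gammaHom X K γ * b * (gammaHom X K γ)⁻¹, ?_, ?_⟩
  · intro k
    obtain ⟨h, hH, heq⟩ := hb (γ⁻¹ k)
    refine ⟨h, hH, fun x => ?_⟩
    show gammaHom X K γ (b ((gammaHom X K γ)⁻¹ (x, k))) = (h x, k)
    rw [hginv (x, k)]
    show gammaHom X K γ (b (x, γ⁻¹ k)) = (h x, k)
    rw [heq, gammaHom_apply]
    simp
  · refine Equiv.ext fun p => ?_
    show gammaHom X K γ ((lamHom X K (Equiv.mulRight c)) (b ((gammaHom X K γ)⁻¹ p)))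
      = (lamHom X K (Equiv.mulRight (γ c))) (gammaHom X K γ (b ((gammaHom X K γ)⁻¹ p)))
    obtain ⟨x, k⟩ := b ((gammaHom X K γ)⁻¹ p)
    simp [lamHom_apply, gammaHom_apply, map_mul]

lemma gamma_mem_normalizer (H : Subgroup (Perm X)) (γ : MulAut K) :
    gammaHom X K γ ∈ (Subgroup.normalizer (wreath X K H (rightRegular K) : Set (Perm (X × K)))) := by
  rw [Subgroup.mem_normalizer_iff]
  intro w
  constructor
  · exact gamma_conj_wreath H γ
  · intro hw
    have h2 := gamma_conj_wreath H γ⁻¹ hw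
    rw [map_inv] at h2
    have h3 : (gammaHom X K γ)⁻¹ * (gammaHom X K γ * w * (gammaHom X K γ)⁻¹) *
        ((gammaHom X K γ)⁻¹)⁻¹ = w := by group
    rwa [h3] at h2

/-- The permutation of `K` induced on blocks by a permutation of `X × K` (when defined). -/
noncomputable def sig (X : Type*) {K : Type*} [Group K] (f : Perm (X × K)) (k : K) : K :=
  @dite _ (∃ k', ⇑f '' block X K k = block X K k') (Classical.dec _) (fun h => h.choose)
    (fun _ => 1)

lemma sig_spec {f : Perm (X × K)} {k : K}
    (h : ∃ k', ⇑f '' block X K k = block X K k') :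
    ⇑f '' block X K k = block X K (sig X f k) := by
  rw [sig, dif_pos h]
  exact h.choose_spec

end Aux
/-- **Lemma E.** With `Y = K` regular and `H ≤ Perm X` transitive, the image of the block
homomorphism `Ω : N → Perm 𝒫` is the internal semidirect product of `Ω(Γ(Aut K))` and
`Ω(Λ(K))`. -/
theorem omega_image_semidirect {X : Type*} (K : Type*) [Group K] (H : Subgroup (Perm X))
    (hH : ∀ x x' : X, ∃ h ∈ H, h x = x')
    (Ω : (Subgroup.normalizer (wreath X K H (rightRegular K) : Set (Perm (X × K)))) →*
      Perm {S : Set (X × K) // ∃ k : K, S = block X K k})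
    (hΩ : ∀ (α : (Subgroup.normalizer (wreath X K H (rightRegular K) : Set (Perm (X × K)))))
        (S : {S : Set (X × K) // ∃ k : K, S = block X K k}),
      (Ω α S : Set (X × K)) = (α : Perm (X × K)) '' (S : Set (X × K))) :
    (gammaHom X K).range ≤ (Subgroup.normalizer (wreath X K H (rightRegular K) : Set (Perm (X × K)))) ∧
    Subgroup.map (lamHom X K) (rightRegular K) ≤ (Subgroup.normalizer (wreath X K H (rightRegular K) : Set (Perm (X × K)))) ∧
    (∀ q ∈ Ω.range,
      ∃ a ∈ Subgroup.map Ω (Subgroup.comap (Subgroup.normalizer (wreath X K H (rightRegular K) : Set (Perm (X × K)))).subtype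
          (gammaHom X K).range),
      ∃ l ∈ Subgroup.map Ω (Subgroup.comap (Subgroup.normalizer (wreath X K H (rightRegular K) : Set (Perm (X × K)))).subtype
          (Subgroup.map (lamHom X K) (rightRegular K))),
        q = a * l) ∧
    (∀ q ∈ Ω.range,
      ∀ l ∈ Subgroup.map Ω (Subgroup.comap (Subgroup.normalizer (wreath X K H (rightRegular K) : Set (Perm (X × K)))).subtype
          (Subgroup.map (lamHom X K) (rightRegular K))),
        q * l * q⁻¹ ∈ Subgroup.map Ω
          (Subgroup.comap (Subgroup.normalizer (wreath X K H (rightRegular K) : Set (Perm (X × K)))).subtype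
            (Subgroup.map (lamHom X K) (rightRegular K)))) ∧
    Subgroup.map Ω (Subgroup.comap (Subgroup.normalizer (wreath X K H (rightRegular K) : Set (Perm (X × K)))).subtype
        (gammaHom X K).range) ⊓
      Subgroup.map Ω (Subgroup.comap (Subgroup.normalizer (wreath X K H (rightRegular K) : Set (Perm (X × K)))).subtype
        (Subgroup.map (lamHom X K) (rightRegular K))) = ⊥ := by
  classical
  have part1 : (gammaHom X K).range ≤ (Subgroup.normalizer (wreath X K H (rightRegular K) : Set (Perm (X × K)))) := by
    rintro _ ⟨γ, rfl⟩
    exact gamma_mem_normalizer H γ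
  have part2 : Subgroup.map (lamHom X K) (rightRegular K)
      ≤ (Subgroup.normalizer (wreath X K H (rightRegular K) : Set (Perm (X × K)))) := by
    rintro _ ⟨kp, ⟨c, rfl⟩, rfl⟩
    exact Subgroup.le_normalizer (lam_mem_wreath H c)
  refine ⟨part1, part2, ?_⟩
  rcases isEmpty_or_nonempty X with hX | hX
  · -- X empty : everything is trivial
    have hsub : Subsingleton {S : Set (X × K) // ∃ k : K, S = block X K k} := by
      constructor
      rintro ⟨S, _⟩ ⟨T, _⟩
      refine Subtype.ext ?_
      ext ⟨x, k⟩
      exact (hX.false x).elim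
    have hperm : ∀ q q' : Perm {S : Set (X × K) // ∃ k : K, S = block X K k}, q = q' :=
      fun q q' => Equiv.ext fun S => @Subsingleton.elim _ hsub _ _
    refine ⟨?_, ?_, ?_⟩
    · intro q _
      exact ⟨1, one_mem _, 1, one_mem _, by rw [one_mul]; exact hperm q 1⟩
    · intro q _ l _
      rw [hperm (q * l * q⁻¹) 1]
      exact one_mem _
    · rw [eq_bot_iff]
      intro p _
      exact Subgroup.mem_bot.mpr (hperm p 1)
  · -- X nonempty
    obtain ⟨x₀⟩ := hX
    have hinj : ∀ k k' : K, block X K k = block X K k' → k = k' := by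
      intro k k' hkk
      have h1 : (x₀, k) ∈ block X K k := rfl
      rw [hkk] at h1
      exact h1
    have hblk : ∀ (α : (Subgroup.normalizer (wreath X K H (rightRegular K) : Set (Perm (X × K))))) (k : K),
        ∃ k', (α : Perm (X × K)) '' block X K k = block X K k' := by
      intro α k
      obtain ⟨k', hk'⟩ := (Ω α ⟨block X K k, ⟨k, rfl⟩⟩).2
      refine ⟨k', ?_⟩
      rw [← hΩ α ⟨block X K k, ⟨k, rfl⟩⟩]
      exact hk'
    have hσ : ∀ (α : (Subgroup.normalizer (wreath X K H (rightRegular K) : Set (Perm (X × K))))) (k : K),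
        (α : Perm (X × K)) '' block X K k = block X K (sig X (α : Perm (X × K)) k) :=
      fun α k => sig_spec (hblk α k)
    have himg2 : ∀ (f : Perm (X × K)) (s : Set (X × K)), ⇑f⁻¹ '' (⇑f '' s) = s := by
      intro f s
      rw [Set.image_image]
      simp
    have key : ∀ (α : (Subgroup.normalizer (wreath X K H (rightRegular K) : Set (Perm (X × K))))) (c : K), ∃ c' : K, ∀ m : K,
        sig X (α : Perm (X × K)) (m * c) = sig X (α : Perm (X × K)) m * c' := by
      intro α c
      have hαW : (α : Perm (X × K)) * lamHom X K (Equiv.mulRight c) * (α : Perm (X × K))⁻¹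
          ∈ wreath X K H (rightRegular K) :=
        (Subgroup.mem_normalizer_iff.mp α.2 _).mp (lam_mem_wreath H c)
      obtain ⟨c', hc'⟩ := wreathElt_image_block hαW
      refine ⟨c', fun m => ?_⟩
      apply hinj
      have h2 : ((α : Perm (X × K)) * lamHom X K (Equiv.mulRight c) * (α : Perm (X × K))⁻¹)
          '' block X K (sig X (α : Perm (X × K)) m)
          = block X K (sig X (α : Perm (X × K)) (m * c)) := by
        have hc1 : ⇑((α : Perm (X × K)) * lamHom X K (Equiv.mulRight c)
            * (α : Perm (X × K))⁻¹)
            = ⇑(α : Perm (X × K)) ∘ ⇑(lamHom X K (Equiv.mulRight c))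
              ∘ ⇑(α : Perm (X × K))⁻¹ := rfl
        rw [hc1, Set.image_comp, Set.image_comp, ← hσ α m, himg2, lam_image_block,
          hσ α (m * c)]
      rw [hc' (sig X (α : Perm (X × K)) m)] at h2
      exact h2.symm
    have hmul : ∀ (α : (Subgroup.normalizer (wreath X K H (rightRegular K) : Set (Perm (X × K))))) (m c : K),
        sig X (α : Perm (X × K)) (m * c)
          = sig X (α : Perm (X × K)) m
            * ((sig X (α : Perm (X × K)) 1)⁻¹ * sig X (α : Perm (X × K)) c) := by
      intro α m c
      obtain ⟨c', hc'⟩ := key α c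
      have h1 := hc' 1
      rw [one_mul] at h1
      rw [hc' m, h1]
      group
    have hστ : ∀ (α : (Subgroup.normalizer (wreath X K H (rightRegular K) : Set (Perm (X × K))))) (k : K),
        sig X ((α⁻¹ : (Subgroup.normalizer (wreath X K H (rightRegular K) : Set (Perm (X × K))))) : Perm (X × K))
          (sig X (α : Perm (X × K)) k) = k := by
      intro α k
      apply hinj
      rw [← hσ α⁻¹ (sig X (α : Perm (X × K)) k), ← hσ α k]
      have hcoe : ((α⁻¹ : (Subgroup.normalizer (wreath X K H (rightRegular K) : Set (Perm (X × K))))) : Perm (X × K))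
          = ((α : Perm (X × K)))⁻¹ := rfl
      rw [hcoe, himg2]
    have hτσ : ∀ (α : (Subgroup.normalizer (wreath X K H (rightRegular K) : Set (Perm (X × K))))) (k : K),
        sig X (α : Perm (X × K))
          (sig X ((α⁻¹ : (Subgroup.normalizer (wreath X K H (rightRegular K) : Set (Perm (X × K))))) : Perm (X × K)) k)
          = k := by
      intro α k
      have h := hστ α⁻¹ k
      rwa [inv_inv] at h
    refine ⟨?_, ?_, ?_⟩
    · -- decomposition q = a * l
      rintro q ⟨α, rfl⟩
      have hbij : Function.Bijective (fun k => sig X (α : Perm (X × K)) k) :=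
        ⟨Function.LeftInverse.injective (hστ α), Function.RightInverse.surjective (hτσ α)⟩
      let g : K →* K :=
        { toFun := fun k => sig X (α : Perm (X × K)) k * (sig X (α : Perm (X × K)) 1)⁻¹
          map_one' := by simp
          map_mul' := fun m c => by
            rw [hmul α m c]
            group }
      have hgbij : Function.Bijective g := by
        constructor
        · intro a b hab
          exact hbij.1 (mul_right_cancel hab)
        · intro b
          obtain ⟨a, ha⟩ := hbij.2 (b * sig X (α : Perm (X × K)) 1)
          refine ⟨a, ?_⟩
          show sig X (α : Perm (X × K)) a * (sig X (α : Perm (X × K)) 1)⁻¹ = b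
          rw [show sig X (α : Perm (X × K)) a = b * sig X (α : Perm (X × K)) 1 from ha]
          group
      let γ : MulAut K := MulEquiv.ofBijective g hgbij
      have hγapp : ∀ k, γ k = sig X (α : Perm (X × K)) k * (sig X (α : Perm (X × K)) 1)⁻¹ :=
        fun k => rfl
      refine ⟨Ω ⟨gammaHom X K γ, gamma_mem_normalizer H γ⟩,
        Subgroup.mem_map.mpr ⟨⟨gammaHom X K γ, gamma_mem_normalizer H γ⟩,
          Subgroup.mem_comap.mpr ⟨γ, rfl⟩, rfl⟩,
        Ω ⟨lamHom X K (Equiv.mulRight (γ.symm (sig X (α : Perm (X × K)) 1))),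
          Subgroup.le_normalizer (lam_mem_wreath H _)⟩,
        Subgroup.mem_map.mpr ⟨⟨lamHom X K (Equiv.mulRight (γ.symm (sig X (α : Perm (X × K)) 1))),
          Subgroup.le_normalizer (lam_mem_wreath H _)⟩,
          Subgroup.mem_comap.mpr ⟨Equiv.mulRight (γ.symm (sig X (α : Perm (X × K)) 1)),
            ⟨γ.symm (sig X (α : Perm (X × K)) 1), rfl⟩, rfl⟩, rfl⟩, ?_⟩
      refine Equiv.ext fun S => ?_
      refine Subtype.ext ?_
      rw [Perm.mul_apply, hΩ, hΩ, hΩ]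
      obtain ⟨k, hk⟩ := S.2
      rw [hk, hσ α k, lam_image_block (γ.symm (sig X (α : Perm (X × K)) 1)) k,
        gamma_image_block γ (k * γ.symm (sig X (α : Perm (X × K)) 1))]
      have hfin : γ (k * γ.symm (sig X (α : Perm (X × K)) 1))
          = sig X (α : Perm (X × K)) k := by
        rw [map_mul, hγapp k, MulEquiv.apply_symm_apply]
        group
      rw [hfin]
    · -- normality of Ω(Λ K)
      rintro q ⟨α, rfl⟩ l ⟨β, hβ, rfl⟩
      obtain ⟨y, hy, hyval⟩ := Subgroup.mem_map.mp (Subgroup.mem_comap.mp hβ)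
      obtain ⟨c, rfl⟩ := hy
      refine Subgroup.mem_map.mpr ⟨⟨lamHom X K (Equiv.mulRight
          ((sig X (α : Perm (X × K)) 1)⁻¹ * sig X (α : Perm (X × K)) c)),
          Subgroup.le_normalizer (lam_mem_wreath H _)⟩,
          Subgroup.mem_comap.mpr ⟨Equiv.mulRight
            ((sig X (α : Perm (X × K)) 1)⁻¹ * sig X (α : Perm (X × K)) c),
            ⟨(sig X (α : Perm (X × K)) 1)⁻¹ * sig X (α : Perm (X × K)) c, rfl⟩, rfl⟩, ?_⟩
      rw [← map_inv]
      refine Equiv.ext fun S => ?_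
      refine Subtype.ext ?_
      rw [Perm.mul_apply, Perm.mul_apply, hΩ, hΩ, hΩ, hΩ]
      obtain ⟨k, hk⟩ := S.2
      have hβc : ((β : (Subgroup.normalizer (wreath X K H (rightRegular K) : Set (Perm (X × K))))) : Perm (X × K))
          = lamHom X K (Equiv.mulRight c) := hyval.symm
      rw [hk, hβc, hσ α⁻¹ k,
        lam_image_block c (sig X ((α⁻¹ : (Subgroup.normalizer (wreath X K H (rightRegular K) : Set (Perm (X × K)))))
          : Perm (X × K)) k),
        hσ α, lam_image_block ((sig X (α : Perm (X × K)) 1)⁻¹ * sig X (α : Perm (X × K)) c) k,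
        hmul α _ c, hτσ α k]
    · -- trivial intersection
      rw [eq_bot_iff]
      intro p hp
      rw [Subgroup.mem_inf] at hp
      obtain ⟨hp1, hp2⟩ := hp
      obtain ⟨n1, hn1, rfl⟩ := Subgroup.mem_map.mp hp1
      obtain ⟨γ, hγ⟩ := Subgroup.mem_comap.mp hn1
      obtain ⟨n2, hn2, hn2eq⟩ := Subgroup.mem_map.mp hp2
      obtain ⟨y, hy, hyval⟩ := Subgroup.mem_map.mp (Subgroup.mem_comap.mp hn2)
      obtain ⟨c, rfl⟩ := hy
      have hn1c : ((n1 : (Subgroup.normalizer (wreath X K H (rightRegular K) : Set (Perm (X × K))))) : Perm (X × K))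
          = gammaHom X K γ := hγ.symm
      have hn2c : ((n2 : (Subgroup.normalizer (wreath X K H (rightRegular K) : Set (Perm (X × K))))) : Perm (X × K))
          = lamHom X K (Equiv.mulRight c) := hyval.symm
      have hc : c = 1 := by
        apply hinj
        have h1 : (Ω n1 ⟨block X K 1, ⟨1, rfl⟩⟩ : Set (X × K)) = block X K 1 := by
          rw [hΩ, hn1c]
          show ⇑(gammaHom X K γ) '' block X K 1 = block X K 1
          rw [gamma_image_block, map_one]
        have h2 : (Ω n2 ⟨block X K 1, ⟨1, rfl⟩⟩ : Set (X × K)) = block X K c := by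
          rw [hΩ, hn2c]
          show ⇑(lamHom X K (Equiv.mulRight c)) '' block X K 1 = block X K c
          rw [lam_image_block, one_mul]
        rw [← h2, hn2eq, h1]
      subst hc
      have hone : Ω n2 = 1 := by
        refine Equiv.ext fun S => ?_
        refine Subtype.ext ?_
        rw [hΩ, hn2c]
        obtain ⟨k, hk⟩ := S.2
        show ⇑(lamHom X K (Equiv.mulRight 1)) '' (S : Set (X × K))
          = ((1 : Perm {S : Set (X × K) // ∃ k : K, S = block X K k}) S : Set (X × K))
        rw [hk, lam_image_block, mul_one, Perm.one_apply]
        exact hk.symm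
      rw [← hn2eq, hone]
      exact Subgroup.mem_bot.mpr rfl
end

section
/- Assume Y = K acts on itself by the regular representation, H ≤ Perm(X) is transitive, and the normalizer of H in Perm(X) is the internal semidirect product M ⋉ H for a subgroup M of Perm(X). Then N ∩ S_K(Z) = M* · B: every element of the normalizer N of W = H ≀ K that stabilizes each block X_k setwise is a product of an element of M* and an element of the base group B, and conversely M* · B ⊆ N ∩ S_K(Z). -/
open Equiv

section KeyLemma

variable {X : Type*} {K : Type*} [Group K]

lemma mem_blockStab_iff (f : Perm (X × K)) :
    f ∈ blockStab X K ↔ ∀ p : X × K, (f p).2 = p.2 := by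
  constructor
  · intro hf p
    have h1 : f p ∈ ⇑f '' block X K p.2 := ⟨p, rfl, rfl⟩
    rw [hf p.2] at h1
    exact h1
  · intro h k
    ext q
    constructor
    · rintro ⟨p, hp, rfl⟩
      exact (h p).trans hp
    · intro hq
      refine ⟨f⁻¹ q, ?_, by simp⟩
      have h2 := h (f⁻¹ q)
      simp only [Perm.inv_def, Equiv.apply_symm_apply] at h2
      exact h2.symm.trans hq

lemma inv_snd (f : Perm (X × K)) (hf : ∀ p : X × K, (f p).2 = p.2) (p : X × K) :
    (f⁻¹ p).2 = p.2 := by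
  have h := hf (f⁻¹ p)
  simpa using h.symm

/-- The permutation of `X` induced by a block-preserving `f` on the fiber over `k`. -/
def fiberOf (f : Perm (X × K)) (hf : ∀ p : X × K, (f p).2 = p.2) (k : K) :
    Perm X where
  toFun x := (f (x, k)).1
  invFun x := (f⁻¹ (x, k)).1
  left_inv x := by
    have h1 : ((f (x, k)).1, k) = f (x, k) := Prod.ext rfl (hf (x, k)).symm
    show (f⁻¹ ((f (x, k)).1, k)).1 = x
    rw [h1]; simp
  right_inv x := by
    have h1 : ((f⁻¹ (x, k)).1, k) = f⁻¹ (x, k) := Prod.ext rfl (inv_snd f hf (x, k)).symm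
    show (f ((f⁻¹ (x, k)).1, k)).1 = x
    rw [h1]; simp

lemma fiberOf_apply (f : Perm (X × K)) (hf : ∀ p : X × K, (f p).2 = p.2) (k : K) (x : X) :
    f (x, k) = (fiberOf f hf k x, k) := Prod.ext rfl (hf (x, k))

lemma fiberOf_inv_apply (f : Perm (X × K)) (hf : ∀ p : X × K, (f p).2 = p.2) (k : K) (x : X) :
    f⁻¹ (x, k) = ((fiberOf f hf k)⁻¹ x, k) := Prod.ext rfl (inv_snd f hf (x, k))

lemma fiberOf_inv (f : Perm (X × K)) (hf : ∀ p : X × K, (f p).2 = p.2) (k : K) :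
    fiberOf f⁻¹ (inv_snd f hf) k = (fiberOf f hf k)⁻¹ :=
  Equiv.ext fun _ => rfl

lemma wreath_blockStab_mem_baseGroup {H : Subgroup (Perm X)} {w : Perm (X × K)}
    (hw : w ∈ wreath X K H (rightRegular K)) (hs : ∀ p : X × K, (w p).2 = p.2) :
    w ∈ baseGroup X K H := by
  obtain ⟨κ, hκ, b, hb, rfl⟩ := hw
  intro k
  obtain ⟨h, hH, heq⟩ := hb k
  refine ⟨h, hH, fun x => ?_⟩
  have h1 : (lamHom X K κ * b) (x, k) = (h x, κ k) := by
    have h0 : (lamHom X K κ * b) (x, k) = lamHom X K κ (b (x, k)) := rfl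
    rw [h0, heq x, lamHom_apply]
  have h2 := hs (x, k)
  rw [h1] at h2
  rw [h1]
  exact Prod.ext rfl h2

lemma mstar_mul_lam (m : Perm X) (κ : Perm K) :
    mstarHom X K m * lamHom X K κ = lamHom X K κ * mstarHom X K m :=
  Equiv.ext fun _ => rfl

lemma mstar_conj_base {H : Subgroup (Perm X)} {m : Perm X} (hm : m ∈ Subgroup.normalizer (H : Set (Perm X)))
    {b : Perm (X × K)} (hb : b ∈ baseGroup X K H) :
    mstarHom X K m * b * (mstarHom X K m)⁻¹ ∈ baseGroup X K H := by
  intro k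
  obtain ⟨h, hH, heq⟩ := hb k
  refine ⟨m * h * m⁻¹, (Subgroup.mem_normalizer_iff.mp hm h).mp hH, fun x => ?_⟩
  have e1 : (mstarHom X K m)⁻¹ = mstarHom X K m⁻¹ := (map_inv _ _).symm
  calc (mstarHom X K m * b * (mstarHom X K m)⁻¹) (x, k)
      = mstarHom X K m (b ((mstarHom X K m)⁻¹ (x, k))) := rfl
    _ = mstarHom X K m (b (m⁻¹ x, k)) := by rw [e1, mstarHom_apply X K m⁻¹ x k]
    _ = mstarHom X K m (h (m⁻¹ x), k) := by rw [heq]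
    _ = ((m * h * m⁻¹) x, k) := rfl

lemma mstar_conj_wreath {H : Subgroup (Perm X)} {m : Perm X} (hm : m ∈ Subgroup.normalizer (H : Set (Perm X)))
    {w : Perm (X × K)} (hw : w ∈ wreath X K H (rightRegular K)) :
    mstarHom X K m * w * (mstarHom X K m)⁻¹ ∈ wreath X K H (rightRegular K) := by
  obtain ⟨κ, hκ, b, hb, rfl⟩ := hw
  refine ⟨κ, hκ, mstarHom X K m * b * (mstarHom X K m)⁻¹, mstar_conj_base hm hb, ?_⟩
  calc mstarHom X K m * (lamHom X K κ * b) * (mstarHom X K m)⁻¹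
      = (mstarHom X K m * lamHom X K κ) * (b * (mstarHom X K m)⁻¹) := by group
    _ = (lamHom X K κ * mstarHom X K m) * (b * (mstarHom X K m)⁻¹) := by rw [mstar_mul_lam]
    _ = lamHom X K κ * (mstarHom X K m * b * (mstarHom X K m)⁻¹) := by group

lemma mstar_mem_normalizer {H : Subgroup (Perm X)} {m : Perm X} (hm : m ∈ Subgroup.normalizer (H : Set (Perm X))) :
    mstarHom X K m ∈ Subgroup.normalizer (wreath X K H (rightRegular K) : Set (Perm (X × K))) := by
  rw [Subgroup.mem_normalizer_iff]
  intro w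
  constructor
  · exact fun hw => mstar_conj_wreath hm hw
  · intro hw
    have h2 := mstar_conj_wreath ((Subgroup.normalizer (H : Set (Perm X))).inv_mem hm) hw
    rw [map_inv] at h2
    have e : (mstarHom X K m)⁻¹ * (mstarHom X K m * w * (mstarHom X K m)⁻¹) *
        ((mstarHom X K m)⁻¹)⁻¹ = w := by group
    rwa [e] at h2

lemma fiberPerm_snd (h : Perm X) (k : K) (q : X × K) :
    (fiberPerm X K h k q).2 = q.2 := by
  by_cases hq : q.2 = k
  · obtain ⟨x, k'⟩ := q
    simp only at hq
    subst hq
    rw [fiberPerm_apply_eq]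
  · rw [fiberPerm_apply_ne X K h k q hq]

lemma conj_fiber_mem {H : Subgroup (Perm X)} {f : Perm (X × K)}
    (hN : f ∈ Subgroup.normalizer (wreath X K H (rightRegular K) : Set (Perm (X × K))))
    (hS : ∀ p : X × K, (f p).2 = p.2) (k : K) {h : Perm X} (hh : h ∈ H) :
    fiberOf f hS k * h * (fiberOf f hS k)⁻¹ ∈ H := by
  set g := fiberOf f hS with hg
  have hfib : fiberPerm X K h k ∈ wreath X K H (rightRegular K) := by
    refine ⟨1, (rightRegular K).one_mem, fiberPerm X K h k, ?_, by rw [map_one, one_mul]⟩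
    intro k'
    by_cases hk : k' = k
    · subst hk
      exact ⟨h, hh, fun x => fiberPerm_apply_eq X K h k' x⟩
    · exact ⟨1, H.one_mem, fun x => by rw [fiberPerm_apply_ne X K h k (x, k') hk]; rfl⟩
  have hw : f * fiberPerm X K h k * f⁻¹ ∈ wreath X K H (rightRegular K) :=
    (Subgroup.mem_normalizer_iff.mp hN _).mp hfib
  have hws : ∀ p : X × K, ((f * fiberPerm X K h k * f⁻¹) p).2 = p.2 := by
    intro p
    calc ((f * fiberPerm X K h k * f⁻¹) p).2
        = (f (fiberPerm X K h k (f⁻¹ p))).2 := rfl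
      _ = (fiberPerm X K h k (f⁻¹ p)).2 := hS _
      _ = (f⁻¹ p).2 := fiberPerm_snd h k _
      _ = p.2 := inv_snd f hS p
  obtain ⟨h', hH', heq⟩ := wreath_blockStab_mem_baseGroup hw hws k
  have e : g k * h * (g k)⁻¹ = h' := by
    refine Equiv.ext fun x => ?_
    have e3 : (f * fiberPerm X K h k * f⁻¹) (x, k) = ((g k * h * (g k)⁻¹) x, k) := by
      calc (f * fiberPerm X K h k * f⁻¹) (x, k)
          = f (fiberPerm X K h k (f⁻¹ (x, k))) := rfl
        _ = f (fiberPerm X K h k ((g k)⁻¹ x, k)) := by rw [fiberOf_inv_apply f hS k x]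
        _ = f (h ((g k)⁻¹ x), k) := by rw [fiberPerm_apply_eq]
        _ = (g k (h ((g k)⁻¹ x)), k) := fiberOf_apply f hS k _
        _ = ((g k * h * (g k)⁻¹) x, k) := rfl
    have e4 := heq x
    rw [e3] at e4
    exact congrArg Prod.fst e4
  rw [e]
  exact hH'

end KeyLemma

/-- The key claim in the proof of **Lemma G**: with `Y = K` regular, `H ≤ Perm X`
transitive and `N_{Perm X}(H) = M ⋉ H`, one has `N ∩ S_K(Z) = M*·B`. -/
theorem normalizer_inter_blockStab_eq {X : Type*} (K : Type*) [Group K]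
    (H M : Subgroup (Perm X))
    (hH : ∀ x x' : X, ∃ h ∈ H, h x = x')
    (hNH : ∀ g : Perm X, g ∈ Subgroup.normalizer (H : Set (Perm X)) ↔ ∃ m ∈ M, ∃ h ∈ H, g = m * h)
    (hMH : M ⊓ H = ⊥) (f : Perm (X × K)) :
    (f ∈ Subgroup.normalizer (wreath X K H (rightRegular K) : Set (Perm (X × K))) ∧ f ∈ blockStab X K) ↔
      ∃ m ∈ M, ∃ b ∈ baseGroup X K H, f = mstarHom X K m * b := by
  constructor
  · rintro ⟨hN, hSmem⟩
    have hS : ∀ p : X × K, (f p).2 = p.2 := (mem_blockStab_iff f).mp hSmem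
    set g := fiberOf f hS with hg
    -- each fiber permutation normalizes H
    have hgnorm : ∀ k : K, g k ∈ Subgroup.normalizer (H : Set (Perm X)) := by
      intro k
      rw [Subgroup.mem_normalizer_iff]
      intro h
      constructor
      · exact fun hh => conj_fiber_mem hN hS k hh
      · intro hh
        have hN' : f⁻¹ ∈ Subgroup.normalizer (wreath X K H (rightRegular K) : Set (Perm (X × K))) :=
          Subgroup.inv_mem _ hN
        have h2 := conj_fiber_mem hN' (inv_snd f hS) k hh
        rw [fiberOf_inv f hS k] at h2
        have e : (g k)⁻¹ * (g k * h * (g k)⁻¹) * ((g k)⁻¹)⁻¹ = h := by group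
        rwa [e] at h2
    -- relative fiber permutations lie in H
    have hrel : ∀ k' : K, g k' * (g 1)⁻¹ ∈ H := by
      intro k'
      have hlam : lamHom X K (Equiv.mulRight k') ∈ wreath X K H (rightRegular K) :=
        ⟨Equiv.mulRight k', ⟨k', rfl⟩, 1, (baseGroup X K H).one_mem, (mul_one _).symm⟩
      have hw : f * lamHom X K (Equiv.mulRight k') * f⁻¹ ∈ wreath X K H (rightRegular K) :=
        (Subgroup.mem_normalizer_iff.mp hN _).mp hlam
      obtain ⟨κ, hκ, b, hb, heqw⟩ := hw
      obtain ⟨h, hHh, heqb⟩ := hb 1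
      have key : ∀ x : X, h x = g k' ((g 1)⁻¹ x) := by
        intro x
        have e1 : (f * lamHom X K (Equiv.mulRight k') * f⁻¹) (x, 1)
            = (g k' ((g 1)⁻¹ x), k') := by
          calc (f * lamHom X K (Equiv.mulRight k') * f⁻¹) (x, 1)
              = f (lamHom X K (Equiv.mulRight k') (f⁻¹ (x, 1))) := rfl
            _ = f (lamHom X K (Equiv.mulRight k') ((g 1)⁻¹ x, 1)) := by
                rw [fiberOf_inv_apply f hS 1 x]
            _ = f ((g 1)⁻¹ x, 1 * k') := rfl
            _ = f ((g 1)⁻¹ x, k') := by rw [one_mul]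
            _ = (g k' ((g 1)⁻¹ x), k') := fiberOf_apply f hS k' _
        have e2 : (lamHom X K κ * b) (x, 1) = (h x, κ 1) := by
          calc (lamHom X K κ * b) (x, 1) = lamHom X K κ (b (x, 1)) := rfl
            _ = lamHom X K κ (h x, 1) := by rw [heqb x]
            _ = (h x, κ 1) := rfl
        rw [heqw, e2] at e1
        exact congrArg Prod.fst e1
      have e : g k' * (g 1)⁻¹ = h := (Equiv.ext fun x => key x).symm
      rw [e]
      exact hHh
    obtain ⟨m, hm, h0, hh0, hgm⟩ := (hNH (g 1)).mp (hgnorm 1)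
    have hmnorm : m ∈ Subgroup.normalizer (H : Set (Perm X)) := (hNH m).mpr ⟨m, hm, 1, H.one_mem, (mul_one m).symm⟩
    refine ⟨m, hm, (mstarHom X K m)⁻¹ * f, ?_, by group⟩
    intro k
    have h2 : m⁻¹ * g k ∈ H := by
      have h3 : m⁻¹ * (g k * (g 1)⁻¹) * (m⁻¹)⁻¹ ∈ H :=
        (Subgroup.mem_normalizer_iff.mp ((Subgroup.normalizer (H : Set (Perm X))).inv_mem hmnorm) _).mp (hrel k)
      have e : m⁻¹ * g k = (m⁻¹ * (g k * (g 1)⁻¹) * (m⁻¹)⁻¹) * h0 := by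
        rw [hgm]; group
      rw [e]
      exact H.mul_mem h3 hh0
    refine ⟨m⁻¹ * g k, h2, fun x => ?_⟩
    calc ((mstarHom X K m)⁻¹ * f) (x, k) = (mstarHom X K m)⁻¹ (f (x, k)) := rfl
      _ = (mstarHom X K m)⁻¹ (g k x, k) := by rw [fiberOf_apply f hS k x]
      _ = mstarHom X K m⁻¹ (g k x, k) := by rw [map_inv]
      _ = ((m⁻¹ * g k) x, k) := rfl
  · rintro ⟨m, hm, b, hb, rfl⟩
    have hmnorm : m ∈ Subgroup.normalizer (H : Set (Perm X)) := (hNH m).mpr ⟨m, hm, 1, H.one_mem, (mul_one m).symm⟩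
    constructor
    · refine Subgroup.mul_mem _ (mstar_mem_normalizer hmnorm) (Subgroup.le_normalizer ?_)
      exact ⟨1, (rightRegular K).one_mem, b, hb, by rw [map_one, one_mul]⟩
    · rw [mem_blockStab_iff]
      rintro ⟨x, k⟩
      obtain ⟨h, hHh, heq⟩ := hb k
      calc ((mstarHom X K m * b) (x, k)).2 = (mstarHom X K m (b (x, k))).2 := rfl
        _ = (mstarHom X K m (h x, k)).2 := by rw [heq x]
        _ = k := rfl
end
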